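/- Let A = [A₁|…|Aₙ] be a tensor in ℂ^{m×m×n} with n ≥ 2, given by its slices A₁,…,Aₙ ∈ ℂ^{m×m}, and suppose A₁ is nonsingular. Then the tensor rank of A equals m if and only if the matrices A₂A₁⁻¹, …, AₙA₁⁻¹ can be diagonalized simultaneously, i.e., there exists an invertible matrix P ∈ GL_m(ℂ) such that P⁻¹(A_kA₁⁻¹)P is diagonal for every k = 2,…,n. -/

import Mathlib

open Matrix Finset

/-- The tensor rank of an array `A ∈ 𝔽^{l×m×n}`: the minimal `r` such that `A` is a sum of
`r` elementary (decomposable) tensors `x ⊗ y ⊗ z = (x_i y_j z_k)`. -/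
noncomputable def tensorRank {𝔽 : Type*} [Field 𝔽] {l m n : ℕ}
    (A : Fin l → Fin m → Fin n → 𝔽) : ℕ :=
  sInf {r : ℕ | ∃ (x : Fin r → Fin l → 𝔽) (y : Fin r → Fin m → 𝔽) (z : Fin r → Fin n → 𝔽),
      A = ∑ i : Fin r, fun p q s => x i p * y i q * z i s}

/-- The multilinear matrix multiplication: `(L,M,N)·A` has entries
`b_{pqr} = Σ_{i,j,k} L_{pi} M_{qj} N_{rk} a_{ijk}`. -/
def mulAct {𝔽 : Type*} [Field 𝔽] {l m n : ℕ}
    (L : Matrix (Fin l) (Fin l) 𝔽) (M : Matrix (Fin m) (Fin m) 𝔽) (N : Matrix (Fin n) (Fin n) 𝔽)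
    (A : Fin l → Fin m → Fin n → 𝔽) : Fin l → Fin m → Fin n → 𝔽 :=
  fun p q r => ∑ i, ∑ j, ∑ k, L p i * M q j * N r k * A i j k

/-- The elementary (decomposable) tensor `x ⊗ y ⊗ z = (x_i y_j z_k)`. -/
def elemT {𝔽 : Type*} [Field 𝔽] {l m n : ℕ}
    (x : Fin l → 𝔽) (y : Fin m → 𝔽) (z : Fin n → 𝔽) : Fin l → Fin m → Fin n → 𝔽 :=
  fun i j k => x i * y j * z k

private lemma mul_diag_mul_apply {l r w : ℕ} (X : Matrix (Fin l) (Fin r) ℂ) (d : Fin r → ℂ)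
    (Q : Matrix (Fin r) (Fin w) ℂ) (p : Fin l) (q : Fin w) :
    (X * Matrix.diagonal d * Q) p q = ∑ t, X p t * Q t q * d t := by
  rw [Matrix.mul_apply]
  exact Finset.sum_congr rfl fun t _ => by rw [Matrix.mul_diagonal]; ring

/-- Each slice of a tensor given by a rank-`r` decomposition factors as `X * D_k * Y`. -/
private lemma slice_factor {m n r : ℕ} {A : Fin m → Fin m → Fin n → ℂ}
    {x : Fin r → Fin m → ℂ} {y : Fin r → Fin m → ℂ} {z : Fin r → Fin n → ℂ}
    (hS : A = ∑ i : Fin r, fun p q s => x i p * y i q * z i s) (k : Fin n) :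
    (Matrix.of fun i j => A i j k) =
      (Matrix.of fun p t => x t p) * Matrix.diagonal (fun t => z t k) *
        (Matrix.of fun t q => y t q) := by
  ext p q
  have hA : A p q k = ∑ i : Fin r, x i p * y i q * z i k := by
    rw [hS]; simp
  rw [Matrix.of_apply, hA, mul_diag_mul_apply]
  exact Finset.sum_congr rfl fun t _ => by simp only [Matrix.of_apply]

theorem tensorRank_eq_dim_iff_simultaneously_diagonalizable
    {m n : ℕ} (hm : 2 ≤ m) (hn : 2 ≤ n) (A : Fin m → Fin m → Fin n → ℂ)
    (hA₁ : IsUnit (Matrix.of fun i j => A i j (⟨0, by omega⟩ : Fin n))) :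
    tensorRank A = m ↔
      ∃ P : GL (Fin m) ℂ, ∀ k : Fin n, k ≠ (⟨0, by omega⟩ : Fin n) →
        (((P⁻¹ : GL (Fin m) ℂ) : Matrix (Fin m) (Fin m) ℂ) *
          ((Matrix.of fun i j => A i j k) *
            (Matrix.of fun i j => A i j (⟨0, by omega⟩ : Fin n))⁻¹) *
          (P : Matrix (Fin m) (Fin m) ℂ)).IsDiag := by
  have hn0 : 0 < n := by omega
  set k0 : Fin n := ⟨0, hn0⟩ with hk0def
  set S : Set ℕ := {r : ℕ | ∃ (x : Fin r → Fin m → ℂ) (y : Fin r → Fin m → ℂ)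
      (z : Fin r → Fin n → ℂ), A = ∑ i : Fin r, fun p q s => x i p * y i q * z i s} with hSdef
  have hA₁' : IsUnit (Matrix.of fun i j => A i j k0) := hA₁
  have hA₁det : IsUnit (Matrix.of fun i j => A i j k0).det :=
    (Matrix.isUnit_iff_isUnit_det _).mp hA₁'
  -- lower bound: every r ∈ S satisfies m ≤ r
  have hlb : ∀ r ∈ S, m ≤ r := by
    rintro r ⟨x, y, z, hS⟩
    have hs := slice_factor hS k0
    have h1 : (Matrix.of fun i j => A i j k0).rank = m := by
      rw [Matrix.rank_of_isUnit _ hA₁', Fintype.card_fin]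
    calc m = (Matrix.of fun i j => A i j k0).rank := h1.symm
      _ ≤ ((Matrix.of fun p t => x t p) * Matrix.diagonal (fun t => z t k0)).rank := by
          rw [hs]; exact Matrix.rank_mul_le_left _ _
      _ ≤ (Matrix.of fun p t => x t p).rank := Matrix.rank_mul_le_left _ _
      _ ≤ Fintype.card (Fin r) := Matrix.rank_le_card_width _
      _ = r := Fintype.card_fin r
  constructor
  · -- forward direction
    intro h
    have hne : S.Nonempty := by
      by_contra hcon
      rw [Set.not_nonempty_iff_eq_empty] at hcon
      have h0 : tensorRank A = sInf S := rfl
      rw [h0, hcon, Nat.sInf_empty] at h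
      omega
    have hmem : sInf S ∈ S := Nat.sInf_mem hne
    rw [show sInf S = m from h] at hmem
    obtain ⟨x, y, z, hS⟩ := hmem
    set X : Matrix (Fin m) (Fin m) ℂ := Matrix.of fun p t => x t p with hXdef
    set Y : Matrix (Fin m) (Fin m) ℂ := Matrix.of fun t q => y t q with hYdef
    have hs := slice_factor hS
    -- A₁ = X * D₀ * Y is a unit, hence X, D₀, Y are units
    have hu : IsUnit (X * Matrix.diagonal (fun t => z t k0) * Y).det := by
      rw [← hs k0]; exact hA₁det
    rw [Matrix.det_mul, Matrix.det_mul] at hu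
    have hX : IsUnit X.det := isUnit_of_mul_isUnit_left (isUnit_of_mul_isUnit_left hu)
    have hY : IsUnit (Matrix.of fun t q => y t q).det := isUnit_of_mul_isUnit_right hu
    have hXu : IsUnit X := (Matrix.isUnit_iff_isUnit_det _).mpr hX
    refine ⟨hXu.unit, fun k _ => ?_⟩
    have hcoe : (hXu.unit : Matrix (Fin m) (Fin m) ℂ) = X := hXu.unit_spec
    have hcoeinv : ((hXu.unit⁻¹ : GL (Fin m) ℂ) : Matrix (Fin m) (Fin m) ℂ) = X⁻¹ := by
      rw [Matrix.coe_units_inv, hcoe]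
    rw [hcoe, hcoeinv, hs k, hs k0, Matrix.mul_inv_rev, Matrix.mul_inv_rev]
    simp only [← hXdef, ← hYdef]
    have hexp : X⁻¹ * (X * Matrix.diagonal (fun t => z t k) * Y *
        (Y⁻¹ * ((Matrix.diagonal (fun t => z t k0))⁻¹ * X⁻¹))) * X =
        Matrix.diagonal (fun t => z t k) * (Matrix.diagonal (fun t => z t k0))⁻¹ := by
      simp only [Matrix.mul_assoc,
        Matrix.nonsing_inv_mul_cancel_left _ _ hX,
        Matrix.mul_nonsing_inv_cancel_left Y _ hY,
        Matrix.nonsing_inv_mul _ hX, Matrix.mul_one]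
    rw [hexp, Matrix.inv_diagonal]
    rw [Matrix.diagonal_mul_diagonal]
    exact Matrix.isDiag_diagonal _
  · -- backward direction
    rintro ⟨P, hP⟩
    set Pm : Matrix (Fin m) (Fin m) ℂ := (P : Matrix (Fin m) (Fin m) ℂ) with hPm
    set Pi : Matrix (Fin m) (Fin m) ℂ := ((P⁻¹ : GL (Fin m) ℂ) : Matrix (Fin m) (Fin m) ℂ)
      with hPi
    set A₁ : Matrix (Fin m) (Fin m) ℂ := Matrix.of fun i j => A i j k0 with hA₁def
    set B : Fin n → Matrix (Fin m) (Fin m) ℂ := fun k => Pi * ((Matrix.of fun i j => A i j k) * A₁⁻¹) * Pm with hBdef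
    have hPPi : Pm * Pi = 1 := P.mul_inv
    have hPiP : Pi * Pm = 1 := P.inv_mul
    have hBdiag : ∀ k, (B k).IsDiag := by
      intro k
      by_cases hk : k = k0
      · subst hk
        have : B k0 = 1 := by
          rw [hBdef]
          simp only [← hA₁def, Matrix.mul_nonsing_inv _ hA₁det, Matrix.mul_one, hPiP]
        rw [this]; exact Matrix.isDiag_one
      · exact hP k hk
    have hcancel : ∀ Z : Matrix (Fin m) (Fin m) ℂ, Pm * (Pi * Z) = Z := by
      intro Z; rw [← Matrix.mul_assoc, hPPi, Matrix.one_mul]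
    have key : ∀ k, (Matrix.of fun i j => A i j k) =
        Pm * Matrix.diagonal ((B k).diag) * (Pi * A₁) := by
      intro k
      rw [(hBdiag k).diagonal_diag]
      simp only [hBdef, Matrix.mul_assoc, hcancel, Matrix.nonsing_inv_mul _ hA₁det,
        Matrix.mul_one]
    have hmem : m ∈ S := by
      refine ⟨fun t p => Pm p t, fun t q => (Pi * A₁) t q, fun t k => B k t t, ?_⟩
      funext p q k
      have h1 : A p q k = (Pm * Matrix.diagonal ((B k).diag) * (Pi * A₁)) p q :=
        congrFun (congrFun (congrArg (fun M => (M : Matrix (Fin m) (Fin m) ℂ)) (key k)) p) q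
      rw [show (∑ i : Fin m, fun p q s => Pm p i * (Pi * A₁) i q * B s i i) p q k
          = ∑ i : Fin m, Pm p i * (Pi * A₁) i q * B k i i by simp, h1, mul_diag_mul_apply]
      exact Finset.sum_congr rfl fun t _ => by rw [Matrix.diag_apply]
    have hub : tensorRank A ≤ m := Nat.sInf_le hmem
    have hlow : m ≤ tensorRank A := le_csInf ⟨m, hmem⟩ hlb
    omega
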